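/- Let p, q be positive integers, let C(1), …, C(q) be selfadjoint (Hermitian) p×p complex matrices, and let b(1), …, b(q) be real numbers. The function V : ℝ^q → ℝ defined by V(x) = tr(exp(Σ_{ι=1}^q x(ι)·C(ι))) − Σ_{ι=1}^q x(ι)·b(ι) is differentiable at every point x ∈ ℝ^q, with partial derivatives ∂V/∂x_κ(x) = tr(C(κ)·exp(Σ_{ι=1}^q x(ι)·C(ι))) − b(κ) for each κ = 1, …, q. -/

import Mathlib

open scoped Matrix
set_option maxHeartbeats 1000000
set_option synthInstance.maxHeartbeats 400000
open NormedSpace ContinuousLinearMap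

section PowLemma
variable {𝔸 : Type*} [NormedRing 𝔸] [NormedAlgebra ℂ 𝔸]

noncomputable def powDerivCLM (n : ℕ) (A : 𝔸) : 𝔸 →L[ℂ] 𝔸 :=
  ∑ i ∈ Finset.range n, mulLeftRight ℂ 𝔸 (A ^ i) (A ^ (n - 1 - i))

theorem powDerivCLM_apply (n : ℕ) (A H : 𝔸) :
    powDerivCLM n A H = ∑ i ∈ Finset.range n, A ^ i * H * A ^ (n - 1 - i) := by
  simp [powDerivCLM, ContinuousLinearMap.sum_apply]

theorem norm_powDerivCLM_le [NormOneClass 𝔸] {R : ℝ} (hR : 1 ≤ R) (n : ℕ) {A : 𝔸}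
    (hA : ‖A‖ ≤ R) : ‖powDerivCLM n A‖ ≤ n * R ^ (n - 1) := by
  refine (norm_sum_le _ _).trans ?_
  have hR0 : (0:ℝ) ≤ R := zero_le_one.trans hR
  have key : ∀ i ∈ Finset.range n, ‖mulLeftRight ℂ 𝔸 (A ^ i) (A ^ (n - 1 - i))‖ ≤ R ^ (n-1) := by
    intro i hi
    rw [Finset.mem_range] at hi
    refine (opNorm_mulLeftRight_apply_apply_le ℂ 𝔸 _ _).trans ?_
    have hpow : ∀ k : ℕ, ‖A ^ k‖ ≤ R ^ k := by
      intro k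
      rcases Nat.eq_zero_or_pos k with hk | hk
      · simp [hk]
      · exact (norm_pow_le' A hk).trans (pow_le_pow_left₀ (norm_nonneg A) hA k)
    calc ‖A ^ i‖ * ‖A ^ (n - 1 - i)‖
        ≤ R ^ i * R ^ (n - 1 - i) :=
          mul_le_mul (hpow i) (hpow _) (norm_nonneg _) (by positivity)
      _ = R ^ (i + (n - 1 - i)) := (pow_add R i _).symm
      _ ≤ R ^ (n - 1) := by
          apply pow_le_pow_right₀ hR; omega
  calc ∑ i ∈ Finset.range n, ‖mulLeftRight ℂ 𝔸 (A ^ i) (A ^ (n - 1 - i))‖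
      ≤ ∑ _i ∈ Finset.range n, R ^ (n - 1) := Finset.sum_le_sum key
    _ = n * R ^ (n - 1) := by simp [mul_comm]

theorem hasFDerivAt_pow'' (n : ℕ) (A : 𝔸) :
    HasFDerivAt (fun M : 𝔸 => M ^ n) (powDerivCLM n A) A := by
  induction n with
  | zero =>
      simpa [powDerivCLM] using (hasFDerivAt_const (1 : 𝔸) A)
  | succ n ih =>
      simp only [pow_succ]
      have h := ih.mul' (hasFDerivAt_id A)
      convert h using 1
      · rfl
      · rfl
      ext H
      simp only [powDerivCLM, ContinuousLinearMap.sum_apply, ContinuousLinearMap.add_apply,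
        mulLeftRight_apply, ContinuousLinearMap.smul_apply, ContinuousLinearMap.coe_id', id_eq,
        ContinuousLinearMap.smulRight_apply, smul_eq_mul]
      rw [Finset.sum_range_succ]
      have h1 : n + 1 - 1 - n = 0 := by omega
      rw [h1, pow_zero, mul_one, add_comm]
      congr 1
      rw [op_smul_eq_mul]
      rw [Finset.sum_mul]
      refine Finset.sum_congr rfl fun i hi => ?_
      rw [Finset.mem_range] at hi
      have h2 : n + 1 - 1 - i = (n - 1 - i) + 1 := by omega
      rw [h2, pow_succ]
      simp [mul_assoc]
end PowLemma

section TraceExp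
variable {p : ℕ}

attribute [local instance] Matrix.linftyOpSemiNormedRing Matrix.linftyOpNormedRing
  Matrix.linftyOpNormedAlgebra

@[reducible] noncomputable def matrixLinftyTop {p : ℕ} : TopologicalSpace (Matrix (Fin p) (Fin p) ℂ) :=
  (Matrix.linftyOpSeminormedAddCommGroup (m := Fin p) (n := Fin p) (α := ℂ)).toPseudoMetricSpace.toUniformSpace.toTopologicalSpace

attribute [local instance] matrixLinftyTop

/-- Trace as a continuous linear map on `p × p` complex matrices. -/
noncomputable def traceCLM (p : ℕ) : Matrix (Fin p) (Fin p) ℂ →L[ℂ] ℂ :=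
  LinearMap.toContinuousLinearMap (Matrix.traceLinearMap (Fin p) ℂ ℂ)

@[simp] theorem traceCLM_apply (M : Matrix (Fin p) (Fin p) ℂ) :
    traceCLM p M = Matrix.trace M := rfl

theorem hasFDerivAt_trace_exp (hp : 0 < p) (A : Matrix (Fin p) (Fin p) ℂ) :
    HasFDerivAt (fun M : Matrix (Fin p) (Fin p) ℂ => Matrix.trace (exp M))
      ((traceCLM p).comp ((ContinuousLinearMap.mul ℂ _).flip (exp A))) A := by
  haveI : Nonempty (Fin p) := ⟨⟨0, hp⟩⟩
  set T := traceCLM p with hT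
  set R : ℝ := ‖A‖ + 1 with hRdef
  have hR : 1 ≤ R := by rw [hRdef]; linarith [norm_nonneg A]
  have hAR : ‖A‖ < R := by rw [hRdef]; linarith
  set f : ℕ → Matrix (Fin p) (Fin p) ℂ → ℂ :=
    fun n M => (n.factorial : ℂ)⁻¹ • Matrix.trace (M ^ n) with hf_def
  set f' : ℕ → Matrix (Fin p) (Fin p) ℂ → (Matrix (Fin p) (Fin p) ℂ →L[ℂ] ℂ) :=
    fun n M => (n.factorial : ℂ)⁻¹ • (T.comp (powDerivCLM n M)) with hf'_def
  set u : ℕ → ℝ := fun n => ‖T‖ * ((2*R)^n / n.factorial) with hu_def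
  have hu : Summable u := (Real.summable_pow_div_factorial (2*R)).mul_left _
  have hmemA : A ∈ Metric.ball (0 : Matrix (Fin p) (Fin p) ℂ) R := by
    simpa [mem_ball_zero_iff] using hAR
  have hf : ∀ (n : ℕ) (M : Matrix (Fin p) (Fin p) ℂ), M ∈ Metric.ball (0 : Matrix (Fin p) (Fin p) ℂ) R →
      HasFDerivAt (f n) (f' n M) M := by
    intro n M _
    exact ((T.hasFDerivAt.comp M (hasFDerivAt_pow'' n M)).const_smul ((n.factorial : ℂ)⁻¹))
  have hf' : ∀ (n : ℕ) (M : Matrix (Fin p) (Fin p) ℂ), M ∈ Metric.ball (0 : Matrix (Fin p) (Fin p) ℂ) R →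
      ‖f' n M‖ ≤ u n := by
    intro n M hM
    rw [mem_ball_zero_iff] at hM
    have hcomp : ‖T.comp (powDerivCLM n M)‖ ≤ ‖T‖ * (n * R ^ (n-1)) :=
      (T.opNorm_comp_le _).trans
        (mul_le_mul_of_nonneg_left (norm_powDerivCLM_le hR n hM.le) (norm_nonneg T))
    have h1 : ‖f' n M‖ ≤ ((n.factorial : ℝ))⁻¹ * (‖T‖ * (n * R ^ (n-1))) := by
      rw [hf'_def]
      calc ‖(n.factorial : ℂ)⁻¹ • T.comp (powDerivCLM n M)‖
          ≤ ‖(n.factorial : ℂ)⁻¹‖ * ‖T.comp (powDerivCLM n M)‖ := ContinuousLinearMap.opNorm_smul_le _ _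
        _ = ((n.factorial : ℝ))⁻¹ * ‖T.comp (powDerivCLM n M)‖ := by
            rw [norm_inv, Complex.norm_natCast]
        _ ≤ ((n.factorial : ℝ))⁻¹ * (‖T‖ * (n * R ^ (n-1))) :=
            mul_le_mul_of_nonneg_left hcomp (by positivity)
    refine h1.trans ?_
    rw [hu_def]
    have hcast : (n : ℝ) * R ^ (n-1) ≤ (2*R)^n := by
      rw [mul_pow]
      have h2 : (n : ℝ) ≤ 2^n := by exact_mod_cast (Nat.lt_two_pow_self (n := n)).le
      have h3 : R ^ (n-1) ≤ R ^ n := pow_le_pow_right₀ hR (by omega)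
      exact mul_le_mul h2 h3 (by positivity) (by positivity)
    have hfact : (0 : ℝ) < n.factorial := by exact_mod_cast Nat.factorial_pos n
    calc ((n.factorial : ℝ))⁻¹ * (‖T‖ * (n * R ^ (n-1)))
        = ‖T‖ * ((n * R ^ (n-1)) / n.factorial) := by rw [div_eq_mul_inv]; ring
      _ ≤ ‖T‖ * ((2*R)^n / n.factorial) := by gcongr
  have hf0 : Summable fun n => f n A := by
    have h := NormedSpace.expSeries_summable' (𝕂 := ℂ) A
    have h2 := h.map T.toLinearMap.toAddMonoidHom T.continuous
    refine h2.congr fun n => ?_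
    show T ((n.factorial : ℂ)⁻¹ • A ^ n) = (n.factorial : ℂ)⁻¹ • Matrix.trace (A ^ n)
    rw [map_smul]
    rfl
  have key := hasFDerivAt_tsum_of_isPreconnected hu Metric.isOpen_ball
    ((convex_ball (0 : Matrix (Fin p) (Fin p) ℂ) R).isPreconnected) hf hf' hmemA hf0 hmemA
  have hfun : (fun M : Matrix (Fin p) (Fin p) ℂ => Matrix.trace (exp M)) =
      fun M => ∑' n, f n M := by
    funext M
    rw [exp_eq_tsum ℂ]
    have h3 := T.map_tsum (NormedSpace.expSeries_summable' (𝕂 := ℂ) M)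
    simpa [hf_def, map_smul, hT] using h3
  rw [hfun]
  convert key using 1
  · rfl
  · rfl
  · rfl
  have hsum' : Summable fun n => f' n A :=
    Summable.of_norm_bounded (f := fun n => f' n A) hu fun n => hf' n A hmemA
  refine ContinuousLinearMap.ext fun H => ?_
  have happly : (∑' n, f' n A) H = ∑' n, (f' n A) H :=
    (ContinuousLinearMap.apply ℂ ℂ H).map_tsum hsum'
  rw [happly]
  have hsumH : Summable fun n => (f' n A) H :=
    hsum'.map ((ContinuousLinearMap.apply ℂ ℂ H)).toLinearMap.toAddMonoidHom
      (ContinuousLinearMap.apply ℂ ℂ H).continuous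
  -- each term with index shifted
  have hterm : ∀ n : ℕ, (f' (n+1) A) H = (n.factorial : ℂ)⁻¹ • Matrix.trace (H * A ^ n) := by
    intro n
    rw [hf'_def]
    simp only [ContinuousLinearMap.smul_apply, ContinuousLinearMap.comp_apply]
    rw [powDerivCLM_apply, map_sum]
    have heach : ∀ i ∈ Finset.range (n+1),
        T (A ^ i * H * A ^ (n + 1 - 1 - i)) = Matrix.trace (H * A ^ n) := by
      intro i hi
      rw [Finset.mem_range] at hi
      show Matrix.trace (A ^ i * H * A ^ (n + 1 - 1 - i)) = _
      rw [Matrix.trace_mul_cycle, ← pow_add]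
      have : n + 1 - 1 - i + i = n := by omega
      rw [this, Matrix.trace_mul_comm]
    rw [Finset.sum_congr rfl heach, Finset.sum_const, Finset.card_range]
    have hfc : ((n+1).factorial : ℂ) = ((n : ℂ) + 1) * (n.factorial : ℂ) := by
      push_cast [Nat.factorial_succ]; ring
    rw [hfc, ← Nat.cast_smul_eq_nsmul ℂ, smul_smul]
    congr 1
    have hn1 : ((n : ℂ) + 1) ≠ 0 := Nat.cast_add_one_ne_zero n
    have hnf : ((n.factorial : ℂ)) ≠ 0 := by exact_mod_cast Nat.cast_ne_zero.mpr n.factorial_ne_zero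
    push_cast
    field_simp
  have hL : (T.comp ((ContinuousLinearMap.mul ℂ (Matrix (Fin p) (Fin p) ℂ)).flip (exp A))) H
      = ∑' n, (n.factorial : ℂ)⁻¹ • Matrix.trace (H * A ^ n) := by
    show T (H * exp A) = _
    rw [exp_eq_tsum ℂ]
    have h4 := (T.comp ((ContinuousLinearMap.mul ℂ (Matrix (Fin p) (Fin p) ℂ)) H)).map_tsum
        (NormedSpace.expSeries_summable' (𝕂 := ℂ) A)
    simpa [map_smul, mul_smul_comm, hT] using h4
  rw [hL, Summable.tsum_eq_zero_add hsumH]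
  have h0 : (f' 0 A) H = 0 := by simp [hf'_def, powDerivCLM]
  rw [h0, zero_add]
  exact (tsum_congr hterm).symm
end TraceExp

open NormedSpace

/-- The function `V(x) = tr(exp(∑ ι, x ι • C ι)) − ∑ ι, x ι * b ι`. -/
noncomputable def convPotential {p q : ℕ} (C : Fin q → Matrix (Fin p) (Fin p) ℂ)
    (b : Fin q → ℝ) (x : Fin q → ℝ) : ℝ :=
  (Matrix.trace (NormedSpace.exp (∑ ι, x ι • C ι))).re - ∑ ι, x ι * b ι

theorem convPotential_differentiable_with_partials {p q : ℕ} (hp : 0 < p) (hq : 0 < q)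
    (C : Fin q → Matrix (Fin p) (Fin p) ℂ) (hC : ∀ ι, (C ι).IsHermitian) (b : Fin q → ℝ) :
    ∀ x : Fin q → ℝ, DifferentiableAt ℝ (convPotential C b) x ∧
      ∀ κ : Fin q, fderiv ℝ (convPotential C b) x (Pi.single κ 1) =
        (Matrix.trace (C κ * NormedSpace.exp (∑ ι, x ι • C ι))).re - b κ := by
  intro x
  letI : SeminormedRing (Matrix (Fin p) (Fin p) ℂ) := Matrix.linftyOpSemiNormedRing
  letI : NormedRing (Matrix (Fin p) (Fin p) ℂ) := Matrix.linftyOpNormedRing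
  letI : NormedAlgebra ℂ (Matrix (Fin p) (Fin p) ℂ) := Matrix.linftyOpNormedAlgebra
  letI : NormedSpace ℝ (Matrix (Fin p) (Fin p) ℂ) := Matrix.linftyOpNormedSpace
  letI : TopologicalSpace (Matrix (Fin p) (Fin p) ℂ) := matrixLinftyTop
  haveI : Nonempty (Fin p) := ⟨⟨0, hp⟩⟩
  -- the continuous linear map `x ↦ ∑ ι, x ι • C ι`
  set L : (Fin q → ℝ) →ₗ[ℝ] Matrix (Fin p) (Fin p) ℂ :=
    { toFun := fun y => ∑ ι, y ι • C ι
      map_add' := by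
        intro a c
        simp [add_smul, Finset.sum_add_distrib]
      map_smul' := by
        intro c a
        simp [smul_smul, Finset.smul_sum] } with hL
  set Lc : (Fin q → ℝ) →L[ℝ] Matrix (Fin p) (Fin p) ℂ := LinearMap.toContinuousLinearMap L
    with hLc
  set G : (Fin q → ℝ) →ₗ[ℝ] ℝ :=
    { toFun := fun y => ∑ ι, y ι * b ι
      map_add' := by
        intro a c
        simp [add_mul, Finset.sum_add_distrib]
      map_smul' := by
        intro c a
        simp [mul_assoc, Finset.mul_sum] } with hG
  set Gc : (Fin q → ℝ) →L[ℝ] ℝ := LinearMap.toContinuousLinearMap G with hGc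
  have hLx : Lc x = ∑ ι, x ι • C ι := rfl
  have hexp := (hasFDerivAt_trace_exp hp (Lc x)).restrictScalars ℝ
  have hcomp := hexp.comp x Lc.hasFDerivAt
  have hre := (Complex.reCLM.hasFDerivAt).comp x hcomp
  have hV0 := hre.sub Gc.hasFDerivAt
  have hV : HasFDerivAt (convPotential C b)
      (Complex.reCLM.comp
        ((ContinuousLinearMap.restrictScalars ℝ
            ((traceCLM p).comp
              ((ContinuousLinearMap.mul ℂ (Matrix (Fin p) (Fin p) ℂ)).flip (exp (Lc x))))).comp
          Lc) - Gc) x := hV0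
  refine ⟨hV.differentiableAt, fun κ => ?_⟩
  rw [hV.fderiv]
  have hsingle : Lc (Pi.single κ 1) = C κ := by
    show ∑ ι : Fin q, (Pi.single κ (1:ℝ) : Fin q → ℝ) ι • C ι = C κ
    rw [Fintype.sum_eq_single κ (fun ι hι => by simp [Pi.single_eq_of_ne hι])]
    simp
  have hsingle2 : Gc (Pi.single κ 1) = b κ := by
    show ∑ ι : Fin q, (Pi.single κ (1:ℝ) : Fin q → ℝ) ι * b ι = b κ
    rw [Fintype.sum_eq_single κ (fun ι hι => by simp [Pi.single_eq_of_ne hι])]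
    simp
  simp only [ContinuousLinearMap.sub_apply, ContinuousLinearMap.comp_apply,
    ContinuousLinearMap.coe_restrictScalars', hsingle, hsingle2, Complex.reCLM_apply,
    ContinuousLinearMap.flip_apply, ContinuousLinearMap.mul_apply', traceCLM_apply]
  rfl
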